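/- Fix θ with θ·tan(θ) well-defined, θ = the unique solution in (0,π/2) of sin²θ = (3/2)(1 - θ·cot θ). Then there is a unique such θ and it satisfies 1.2729 < θ < 1.2730. -/

import Mathlib

open Real

lemma trigBase {x ls us lc uc : ℝ} (hx0 : 0 ≤ x) (hx : x ≤ 1)
    (e1 : ls ≤ x - x^3/6 - x^4*(5/96)) (e2 : x - x^3/6 + x^4*(5/96) ≤ us)
    (e3 : lc ≤ 1 - x^2/2 - x^4*(5/96)) (e4 : 1 - x^2/2 + x^4*(5/96) ≤ uc) :
    (ls ≤ Real.sin x ∧ Real.sin x ≤ us) ∧ (lc ≤ Real.cos x ∧ Real.cos x ≤ uc) := by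
  have hax : |x| ≤ 1 := by rwa [abs_of_nonneg hx0]
  have hs := abs_le.1 (Real.sin_bound hax)
  have hc := abs_le.1 (Real.cos_bound hax)
  rw [abs_of_nonneg hx0] at hs hc
  have h54 : x^4*x ≤ x^4*1 := mul_le_mul_of_nonneg_left hx (pow_nonneg hx0 4)
  exact ⟨⟨by linarith [hs.1], by linarith [hs.2]⟩, ⟨by linarith [hc.1], by linarith [hc.2]⟩⟩

lemma trigDbl {t u ls us lc uc ls' us' lc' uc' : ℝ} (ht : u = 2*t)
    (h0s : 0 ≤ ls) (h0c : 0 ≤ lc)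
    (h1 : ls ≤ Real.sin t) (h2 : Real.sin t ≤ us)
    (h3 : lc ≤ Real.cos t) (h4 : Real.cos t ≤ uc)
    (e1 : ls' ≤ 2*ls*lc) (e2 : 2*us*uc ≤ us')
    (e3 : lc' ≤ 2*lc^2 - 1) (e4 : 2*uc^2 - 1 ≤ uc') :
    (ls' ≤ Real.sin u ∧ Real.sin u ≤ us') ∧ (lc' ≤ Real.cos u ∧ Real.cos u ≤ uc') := by
  subst ht
  rw [Real.sin_two_mul, Real.cos_two_mul]
  refine ⟨⟨by nlinarith, by nlinarith⟩, ⟨by nlinarith, by nlinarith⟩⟩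

lemma bndA0 : ((4972245104/1000000000000 : ℝ) ≤ Real.sin (12729/2560000 : ℝ) ∧ Real.sin (12729/2560000 : ℝ) ≤ (4972245169/1000000000000 : ℝ)) ∧ ((999987638255/1000000000000 : ℝ) ≤ Real.cos (12729/2560000 : ℝ) ∧ Real.cos (12729/2560000 : ℝ) ≤ (999987638320/1000000000000 : ℝ)) :=
  trigBase (by norm_num) (by norm_num) (by norm_num) (by norm_num) (by norm_num) (by norm_num)
lemma bndA1 : ((9944367276/1000000000000 : ℝ) ≤ Real.sin (12729/1280000 : ℝ) ∧ Real.sin (12729/1280000 : ℝ) ≤ (9944367408/1000000000000 : ℝ)) ∧ ((999950553325/1000000000000 : ℝ) ≤ Real.cos (12729/1280000 : ℝ) ∧ Real.cos (12729/1280000 : ℝ) ≤ (999950553586/1000000000000 : ℝ)) :=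
  trigDbl (by norm_num) (by norm_num) (by norm_num) bndA0.1.1 bndA0.1.2 bndA0.2.1 bndA0.2.2 (by norm_num) (by norm_num) (by norm_num) (by norm_num)
lemma bndA2 : ((19887751120/1000000000000 : ℝ) ≤ Real.sin (12729/640000 : ℝ) ∧ Real.sin (12729/640000 : ℝ) ≤ (19887751390/1000000000000 : ℝ)) ∧ ((999802218189/1000000000000 : ℝ) ≤ Real.cos (12729/640000 : ℝ) ∧ Real.cos (12729/640000 : ℝ) ≤ (999802219234/1000000000000 : ℝ)) :=
  trigDbl (by norm_num) (by norm_num) (by norm_num) bndA1.1.1 bndA1.1.2 bndA1.2.1 bndA1.2.2 (by norm_num) (by norm_num) (by norm_num) (by norm_num)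
lemma bndA3 : ((39767635369/1000000000000 : ℝ) ≤ Real.sin (12729/320000 : ℝ) ∧ Real.sin (12729/320000 : ℝ) ≤ (39767635951/1000000000000 : ℝ)) ∧ ((999208950991/1000000000000 : ℝ) ≤ Real.cos (12729/320000 : ℝ) ∧ Real.cos (12729/320000 : ℝ) ≤ (999208955171/1000000000000 : ℝ)) :=
  trigDbl (by norm_num) (by norm_num) (by norm_num) bndA2.1.1 bndA2.1.2 bndA2.2.1 bndA2.2.2 (by norm_num) (by norm_num) (by norm_num) (by norm_num)
lemma bndA4 : ((79472354440/1000000000000 : ℝ) ≤ Real.sin (12729/160000 : ℝ) ∧ Real.sin (12729/160000 : ℝ) ≤ (79472355937/1000000000000 : ℝ)) ∧ ((996837055481/1000000000000 : ℝ) ≤ Real.cos (12729/160000 : ℝ) ∧ Real.cos (12729/160000 : ℝ) ≤ (996837072188/1000000000000 : ℝ)) :=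
  trigDbl (by norm_num) (by norm_num) (by norm_num) bndA3.1.1 bndA3.1.2 bndA3.2.1 bndA3.2.2 (by norm_num) (by norm_num) (by norm_num) (by norm_num)
lemma bndA5 : ((158441975584/1000000000000 : ℝ) ≤ Real.sin (12729/80000 : ℝ) ∧ Real.sin (12729/80000 : ℝ) ≤ (158441981225/1000000000000 : ℝ)) ∧ ((987368230360/1000000000000 : ℝ) ≤ Real.cos (12729/80000 : ℝ) ∧ Real.cos (12729/80000 : ℝ) ≤ (987368296977/1000000000000 : ℝ)) :=
  trigDbl (by norm_num) (by norm_num) (by norm_num) bndA4.1.1 bndA4.1.2 bndA4.2.1 bndA4.2.2 (by norm_num) (by norm_num) (by norm_num) (by norm_num)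
lemma bndA6 : ((312881146094/1000000000000 : ℝ) ≤ Real.sin (12729/40000 : ℝ) ∧ Real.sin (12729/40000 : ℝ) ≤ (312881178344/1000000000000 : ℝ)) ∧ ((949792044648/1000000000000 : ℝ) ≤ Real.cos (12729/40000 : ℝ) ∧ Real.cos (12729/40000 : ℝ) ≤ (949792307751/1000000000000 : ℝ)) :=
  trigDbl (by norm_num) (by norm_num) (by norm_num) bndA5.1.1 bndA5.1.2 bndA5.2.1 bndA5.2.2 (by norm_num) (by norm_num) (by norm_num) (by norm_num)
lemma bndA7 : ((594344046960/1000000000000 : ℝ) ≤ Real.sin (12729/20000 : ℝ) ∧ Real.sin (12729/20000 : ℝ) ≤ (594344272863/1000000000000 : ℝ)) ∧ ((804209856153/1000000000000 : ℝ) ≤ Real.cos (12729/20000 : ℝ) ∧ Real.cos (12729/20000 : ℝ) ≤ (804210855726/1000000000000 : ℝ)) :=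
  trigDbl (by norm_num) (by norm_num) (by norm_num) bndA6.1.1 bndA6.1.2 bndA6.2.1 bndA6.2.2 (by norm_num) (by norm_num) (by norm_num) (by norm_num)
lemma bndA8 : ((955954681022/1000000000000 : ℝ) ≤ Real.sin (12729/10000 : ℝ) ∧ Real.sin (12729/10000 : ℝ) ≤ (955956232551/1000000000000 : ℝ)) ∧ ((293506985467/1000000000000 : ℝ) ≤ Real.cos (12729/10000 : ℝ) ∧ Real.cos (12729/10000 : ℝ) ≤ (293510200936/1000000000000 : ℝ)) :=
  trigDbl (by norm_num) (by norm_num) (by norm_num) bndA7.1.1 bndA7.1.2 bndA7.2.1 bndA7.2.2 (by norm_num) (by norm_num) (by norm_num) (by norm_num)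

lemma bndB0 : ((4972635724/1000000000000 : ℝ) ≤ Real.sin (12730/2560000 : ℝ) ∧ Real.sin (12730/2560000 : ℝ) ≤ (4972635789/1000000000000 : ℝ)) ∧ ((999987636313/1000000000000 : ℝ) ≤ Real.cos (12730/2560000 : ℝ) ∧ Real.cos (12730/2560000 : ℝ) ≤ (999987636377/1000000000000 : ℝ)) :=
  trigBase (by norm_num) (by norm_num) (by norm_num) (by norm_num) (by norm_num) (by norm_num)
lemma bndB1 : ((9945148487/1000000000000 : ℝ) ≤ Real.sin (12730/1280000 : ℝ) ∧ Real.sin (12730/1280000 : ℝ) ≤ (9945148619/1000000000000 : ℝ)) ∧ ((999950545557/1000000000000 : ℝ) ≤ Real.cos (12730/1280000 : ℝ) ∧ Real.cos (12730/1280000 : ℝ) ≤ (999950545814/1000000000000 : ℝ)) :=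
  trigDbl (by norm_num) (by norm_num) (by norm_num) bndB0.1.1 bndB0.1.2 bndB0.2.1 bndB0.2.2 (by norm_num) (by norm_num) (by norm_num) (by norm_num)
lemma bndB2 : ((19889313310/1000000000000 : ℝ) ≤ Real.sin (12730/640000 : ℝ) ∧ Real.sin (12730/640000 : ℝ) ≤ (19889313580/1000000000000 : ℝ)) ∧ ((999802187119/1000000000000 : ℝ) ≤ Real.cos (12730/640000 : ℝ) ∧ Real.cos (12730/640000 : ℝ) ≤ (999802188148/1000000000000 : ℝ)) :=
  trigDbl (by norm_num) (by norm_num) (by norm_num) bndB1.1.1 bndB1.1.2 bndB1.2.1 bndB1.2.2 (by norm_num) (by norm_num) (by norm_num) (by norm_num)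
lemma bndB3 : ((39770757895/1000000000000 : ℝ) ≤ Real.sin (12730/320000 : ℝ) ∧ Real.sin (12730/320000 : ℝ) ≤ (39770758477/1000000000000 : ℝ)) ∧ ((999208826735/1000000000000 : ℝ) ≤ Real.cos (12730/320000 : ℝ) ∧ Real.cos (12730/320000 : ℝ) ≤ (999208830852/1000000000000 : ℝ)) :=
  trigDbl (by norm_num) (by norm_num) (by norm_num) bndB2.1.1 bndB2.1.2 bndB2.2.1 bndB2.2.2 (by norm_num) (by norm_num) (by norm_num) (by norm_num)
lemma bndB4 : ((79478584669/1000000000000 : ℝ) ≤ Real.sin (12730/160000 : ℝ) ∧ Real.sin (12730/160000 : ℝ) ≤ (79478586160/1000000000000 : ℝ)) ∧ ((996836558850/1000000000000 : ℝ) ≤ Real.cos (12730/160000 : ℝ) ∧ Real.cos (12730/160000 : ℝ) ≤ (996836575306/1000000000000 : ℝ)) :=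
  trigDbl (by norm_num) (by norm_num) (by norm_num) bndB3.1.1 bndB3.1.2 bndB3.2.1 bndB3.2.2 (by norm_num) (by norm_num) (by norm_num) (by norm_num)
lemma bndB5 : ((158454317687/1000000000000 : ℝ) ≤ Real.sin (12730/80000 : ℝ) ∧ Real.sin (12730/80000 : ℝ) ≤ (158454323276/1000000000000 : ℝ)) ∧ ((987366250119/1000000000000 : ℝ) ≤ Real.cos (12730/80000 : ℝ) ∧ Real.cos (12730/80000 : ℝ) ≤ (987366315736/1000000000000 : ℝ)) :=
  trigDbl (by norm_num) (by norm_num) (by norm_num) bndB4.1.1 bndB4.1.2 bndB4.2.1 bndB4.2.2 (by norm_num) (by norm_num) (by norm_num) (by norm_num)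
lemma bndB6 : ((312904890939/1000000000000 : ℝ) ≤ Real.sin (12730/40000 : ℝ) ∧ Real.sin (12730/40000 : ℝ) ≤ (312904922771/1000000000000 : ℝ)) ∧ ((949784223748/1000000000000 : ℝ) ≤ Real.cos (12730/40000 : ℝ) ∧ Real.cos (12730/40000 : ℝ) ≤ (949784482901/1000000000000 : ℝ)) :=
  trigDbl (by norm_num) (by norm_num) (by norm_num) bndB5.1.1 bndB5.1.2 bndB5.2.1 bndB5.2.2 (by norm_num) (by norm_num) (by norm_num) (by norm_num)
lemma bndB7 : ((594384257894/1000000000000 : ℝ) ≤ Real.sin (12730/20000 : ℝ) ∧ Real.sin (12730/20000 : ℝ) ≤ (594384480543/1000000000000 : ℝ)) ∧ ((804180143361/1000000000000 : ℝ) ≤ Real.cos (12730/20000 : ℝ) ∧ Real.cos (12730/20000 : ℝ) ≤ (804181127920/1000000000000 : ℝ)) :=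
  trigDbl (by norm_num) (by norm_num) (by norm_num) bndB6.1.1 bndB6.1.2 bndB6.2.1 bndB6.2.2 (by norm_num) (by norm_num) (by norm_num) (by norm_num)
lemma bndB8 : ((955984035449/1000000000000 : ℝ) ≤ Real.sin (12730/10000 : ℝ) ∧ Real.sin (12730/10000 : ℝ) ≤ (955985563963/1000000000000 : ℝ)) ∧ ((293411405952/1000000000000 : ℝ) ≤ Real.cos (12730/10000 : ℝ) ∧ Real.cos (12730/10000 : ℝ) ≤ (293414573006/1000000000000 : ℝ)) :=
  trigDbl (by norm_num) (by norm_num) (by norm_num) bndB7.1.1 bndB7.1.2 bndB7.2.1 bndB7.2.2 (by norm_num) (by norm_num) (by norm_num) (by norm_num)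

lemma bndC0 : ((49978841145/1000000000000 : ℝ) ≤ Real.sin (4/80 : ℝ) ∧ Real.sin (4/80 : ℝ) ≤ (49979492188/1000000000000 : ℝ)) ∧ ((998749674479/1000000000000 : ℝ) ≤ Real.cos (4/80 : ℝ) ∧ Real.cos (4/80 : ℝ) ≤ (998750325521/1000000000000 : ℝ)) :=
  trigBase (by norm_num) (by norm_num) (by norm_num) (by norm_num) (by norm_num) (by norm_num)
lemma bndC1 : ((99832702648/1000000000000 : ℝ) ≤ Real.sin (4/40 : ℝ) ∧ Real.sin (4/40 : ℝ) ≤ (99834068185/1000000000000 : ℝ)) ∧ ((995001824543/1000000000000 : ℝ) ≤ Real.cos (4/40 : ℝ) ∧ Real.cos (4/40 : ℝ) ≤ (995004425457/1000000000000 : ℝ)) :=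
  trigDbl (by norm_num) (by norm_num) (by norm_num) bndC0.1.1 bndC0.1.2 bndC0.2.1 bndC0.2.2 (by norm_num) (by norm_num) (by norm_num) (by norm_num)
lemma bndC2 : ((198667442567/1000000000000 : ℝ) ≤ Real.sin (4/20 : ℝ) ∧ Real.sin (4/20 : ℝ) ≤ (198670679311/1000000000000 : ℝ)) ∧ ((980057261687/1000000000000 : ℝ) ≤ Real.cos (4/20 : ℝ) ∧ Real.cos (4/20 : ℝ) ≤ (980067613359/1000000000000 : ℝ)) :=
  trigDbl (by norm_num) (by norm_num) (by norm_num) bndC1.1.1 bndC1.1.2 bndC1.2.1 bndC1.2.2 (by norm_num) (by norm_num) (by norm_num) (by norm_num)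
lemma bndC3 : ((389410939497/1000000000000 : ℝ) ≤ Real.sin (4/10 : ℝ) ∧ Real.sin (4/10 : ℝ) ≤ (389421397034/1000000000000 : ℝ)) ∧ ((921024472370/1000000000000 : ℝ) ≤ Real.cos (4/10 : ℝ) ∧ Real.cos (4/10 : ℝ) ≤ (921065053511/1000000000000 : ℝ)) :=
  trigDbl (by norm_num) (by norm_num) (by norm_num) bndC2.1.1 bndC2.1.2 bndC2.2.1 bndC2.2.2 (by norm_num) (by norm_num) (by norm_num) (by norm_num)
lemma bndC4 : ((717314010170/1000000000000 : ℝ) ≤ Real.sin (4/5 : ℝ) ∧ Real.sin (4/5 : ℝ) ≤ (717364879795/1000000000000 : ℝ)) ∧ ((696572157408/1000000000000 : ℝ) ≤ Real.cos (4/5 : ℝ) ∧ Real.cos (4/5 : ℝ) ≤ (696721665599/1000000000000 : ℝ)) :=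
  trigDbl (by norm_num) (by norm_num) (by norm_num) bndC3.1.1 bndC3.1.2 bndC3.2.1 bndC3.2.2 (by norm_num) (by norm_num) (by norm_num) (by norm_num)
noncomputable def gg (θ : ℝ) : ℝ := 2*Real.sin θ^3 - 3*Real.sin θ + 3*θ*Real.cos θ

lemma gg_cont : Continuous gg := by
  unfold gg; fun_prop

lemma gg_deriv (θ : ℝ) :
    HasDerivAt gg (6*Real.sin θ^2*Real.cos θ - 3*θ*Real.sin θ) θ := by
  have h1 := Real.hasDerivAt_sin θ
  have h2 := Real.hasDerivAt_cos θ
  have h3 : HasDerivAt (fun x : ℝ => 2*Real.sin x^3)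
      (2*((3:ℕ)*Real.sin θ^2*Real.cos θ)) θ := (h1.pow 3).const_mul 2
  have h4 : HasDerivAt (fun x : ℝ => 3*Real.sin x) (3*Real.cos θ) θ := h1.const_mul 3
  have h5 : HasDerivAt (fun x : ℝ => 3*(x*Real.cos x))
      (3*(1*Real.cos θ + θ*(-Real.sin θ))) θ := ((hasDerivAt_id θ).mul h2).const_mul 3
  have h6 := (h3.sub h4).add h5
  convert h6 using 1 <;> try rfl
  · funext x; simp [gg]; ring
  · push_cast; ring

lemma sin_lb (x : ℝ) (h0 : 0 ≤ x) (h1 : x ≤ 1) :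
    x - x^3/6 - x^4*(5/96) ≤ Real.sin x := by
  have hax : |x| ≤ 1 := by rwa [abs_of_nonneg h0]
  have hs := abs_le.1 (Real.sin_bound hax)
  rw [abs_of_nonneg h0] at hs
  have h54 : x^4*x ≤ x^4*1 := mul_le_mul_of_nonneg_left h1 (pow_nonneg h0 4)
  linarith [hs.1]

lemma cos_lb (x : ℝ) (h0 : 0 ≤ x) (h1 : x ≤ 1) :
    1 - x^2/2 - x^4*(5/96) ≤ Real.cos x := by
  have hax : |x| ≤ 1 := by rwa [abs_of_nonneg h0]
  have hc := abs_le.1 (Real.cos_bound hax)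
  rw [abs_of_nonneg h0] at hc
  linarith [hc.1]

lemma gg_mono1 : StrictMonoOn gg (Set.Icc 0 (4/5)) := by
  apply strictMonoOn_of_deriv_pos (convex_Icc _ _) gg_cont.continuousOn
  intro x hx
  rw [interior_Icc] at hx
  rw [(gg_deriv x).deriv]
  have hx0 := hx.1
  have hx1 : x ≤ 1 := by linarith [hx.2]
  have hsl := sin_lb x hx0.le hx1
  have hcl := cos_lb x hx0.le hx1
  have hsp : 0 < Real.sin x := Real.sin_pos_of_pos_of_lt_pi hx0 (by nlinarith [Real.pi_gt_d6])
  have hx2 : x^2 ≤ 16/25 := by nlinarith [hx.2]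
  have hx3 : x^3 ≤ (16/25)*x := by nlinarith [hx.2, mul_pos hx0 hx0]
  have hx4 : x^4 ≤ (16/25)*x^2 := by nlinarith [hx.2, sq_nonneg x, mul_pos (mul_pos hx0 hx0) hx0]
  have hx4' : x^4 ≤ (64/125)*x := by nlinarith [hx3, hx.2, mul_pos (mul_pos hx0 hx0) hx0]
  have hA : (13/15)*x ≤ x - x^3/6 - x^4*(5/96) := by linarith
  have hB : (247/375 : ℝ) ≤ 1 - x^2/2 - x^4*(5/96) := by linarith
  have key : x < 2*Real.sin x*Real.cos x := by
    have hprod : ((13/15)*x) * (247/375) ≤ Real.sin x * Real.cos x := by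
      calc ((13/15)*x) * (247/375) ≤ (x - x^3/6 - x^4*(5/96)) * (1 - x^2/2 - x^4*(5/96)) :=
            mul_le_mul hA hB (by norm_num) (by linarith)
        _ ≤ Real.sin x * Real.cos x := by nlinarith
    nlinarith
  nlinarith


lemma gg_mono2 : MonotoneOn (fun θ => gg θ + (7/25)*θ) (Set.Icc (4/5) 1) := by
  have hd : ∀ x : ℝ, HasDerivAt (fun θ => gg θ + (7/25)*θ)
      (6*Real.sin x^2*Real.cos x - 3*x*Real.sin x + 7/25) x := by
    intro x
    exact (gg_deriv x).add ((hasDerivAt_id x).const_mul (7/25) |>.congr_deriv (by ring))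
  apply monotoneOn_of_deriv_nonneg (convex_Icc _ _)
  · exact (gg_cont.add (continuous_const.mul continuous_id)).continuousOn
  · intro x hx
    exact (hd x).differentiableAt.differentiableWithinAt
  · intro x hx
    rw [interior_Icc] at hx
    rw [(hd x).deriv]
    have hpl := Real.pi_gt_d6
    have hpu := Real.pi_lt_d6
    have hs1 : Real.sin x ≤ 1 := Real.sin_le_one x
    have hs0 : 0 ≤ Real.sin x := Real.sin_nonneg_of_nonneg_of_le_pi (by linarith [hx.1]) (by linarith [hx.2])
    -- sin 2x ≥ 1 - (π/2 - 2x)²/2 ≥ 0.9078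
    have h1 : 1 - (Real.pi/2 - 2*x)^2/2 ≤ Real.sin (2*x) := by
      have := Real.one_sub_sq_div_two_le_cos (x := Real.pi/2 - 2*x)
      rwa [Real.cos_pi_div_two_sub] at this
    rw [Real.sin_two_mul] at h1
    have h2 : (Real.pi/2 - 2*x)^2 ≤ (429205/1000000)^2 := by
      have l1 : Real.pi/2 - 2*x ≤ 0 := by linarith [hx.1]
      have l2 : -(429205/1000000 : ℝ) ≤ Real.pi/2 - 2*x := by linarith [hx.2]
      nlinarith
    have h3 : (9078/10000 : ℝ) ≤ 2*Real.sin x*Real.cos x := by nlinarith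
    rcases le_or_gt (2*Real.sin x*Real.cos x) x with hc | hc
    · nlinarith [mul_nonneg (sub_nonneg.2 hs1) (sub_nonneg.2 hc), hx.2]
    · nlinarith [mul_nonneg hs0 (sub_nonneg.2 hc.le)]

lemma gg_anti : StrictAntiOn gg (Set.Icc 1 (Real.pi/2)) := by
  apply strictAntiOn_of_deriv_neg (convex_Icc _ _) gg_cont.continuousOn
  intro x hx
  rw [interior_Icc] at hx
  rw [(gg_deriv x).deriv]
  have hpu := Real.pi_lt_d6
  have hsp : 0 < Real.sin x := Real.sin_pos_of_pos_of_lt_pi (by linarith [hx.1]) (by linarith [hx.2, Real.pi_gt_d6])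
  have h1 : 2*Real.sin x*Real.cos x ≤ 1 := by
    have := Real.sin_le_one (2*x)
    rwa [Real.sin_two_mul] at this
  nlinarith [hx.1, mul_pos hsp (show (0:ℝ) < x - 2*Real.sin x*Real.cos x by linarith [hx.1])]

lemma gg_pos_aux : ∀ θ : ℝ, 0 < θ → θ ≤ 1 → 0 < gg θ := by
  intro θ h0 h1
  have g08 : (1/4 : ℝ) < gg (4/5) := by
    have hb := bndC4
    have hs1 := hb.1.1
    have hs2 := hb.1.2
    have hc1 := hb.2.1
    show (1/4 : ℝ) < 2*Real.sin (4/5)^3 - 3*Real.sin (4/5) + 3*(4/5)*Real.cos (4/5)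
    nlinarith [hs1, hs2, hc1, sq_nonneg (Real.sin (4/5))]
  rcases le_or_gt θ (4/5) with hc | hc
  · have := gg_mono1 (Set.mem_Icc.2 ⟨le_refl 0, by norm_num⟩) (Set.mem_Icc.2 ⟨h0.le, hc⟩) h0
    have hg0 : gg 0 = 0 := by simp [gg]
    linarith
  · have := gg_mono2 (Set.mem_Icc.2 ⟨le_refl _, by norm_num⟩) (Set.mem_Icc.2 ⟨hc.le, h1⟩) hc.le
    simp only at this
    linarith

lemma ggA_pos : 0 < gg (12729/10000) := by
  have hs1 := bndA8.1.1
  have hs2 := bndA8.1.2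
  have hc1 := bndA8.2.1
  have hcube : ((955954681022/1000000000000 : ℝ))^3 ≤ Real.sin (12729/10000)^3 :=
    pow_le_pow_left₀ (by norm_num) hs1 3
  show 0 < 2*Real.sin (12729/10000)^3 - 3*Real.sin (12729/10000) + 3*(12729/10000)*Real.cos (12729/10000)
  nlinarith [hcube, hs2, hc1]

lemma ggB_neg : gg (12730/10000) < 0 := by
  have hs1 := bndB8.1.1
  have hs2 := bndB8.1.2
  have hc2 := bndB8.2.2
  have hcube : Real.sin (12730/10000)^3 ≤ ((955985563963/1000000000000 : ℝ))^3 :=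
    pow_le_pow_left₀ (by nlinarith [hs1]) hs2 3
  show 2*Real.sin (12730/10000)^3 - 3*Real.sin (12730/10000) + 3*(12730/10000)*Real.cos (12730/10000) < 0
  nlinarith [hcube, hs1, hc2]

theorem stmt_19 :
    ∃ θ : ℝ, (θ ∈ Set.Ioo 0 (Real.pi / 2) ∧
        Real.sin θ ^ 2 = 3 / 2 * (1 - θ * (Real.cos θ / Real.sin θ))) ∧
      (∀ θ' : ℝ, θ' ∈ Set.Ioo 0 (Real.pi / 2) →
        Real.sin θ' ^ 2 = 3 / 2 * (1 - θ' * (Real.cos θ' / Real.sin θ')) → θ' = θ) ∧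
      1.2729 < θ ∧ θ < 1.2730 := by
  have hpl := Real.pi_gt_d6
  have hpu := Real.pi_lt_d6
  have hivt := intermediate_value_Icc' (by norm_num : (12729/10000:ℝ) ≤ 12730/10000)
    (gg_cont.continuousOn : ContinuousOn gg (Set.Icc (12729/10000) (12730/10000)))
  obtain ⟨θ, hθI, hθ0⟩ := hivt ⟨ggB_neg.le, ggA_pos.le⟩
  have hθa : (12729/10000 : ℝ) < θ := by
    rcases eq_or_lt_of_le hθI.1 with h | h
    · exfalso; rw [← h] at hθ0; exact absurd hθ0 ggA_pos.ne'
    · exact h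
  have hθb : θ < (12730/10000 : ℝ) := by
    rcases eq_or_lt_of_le hθI.2 with h | h
    · exfalso; rw [h] at hθ0; exact absurd hθ0 ggB_neg.ne
    · exact h
  have hθpi : θ < Real.pi/2 := by linarith
  have hθ0' : 0 < θ := by linarith
  have hsθ : 0 < Real.sin θ := Real.sin_pos_of_pos_of_lt_pi hθ0' (by linarith)
  have hgg : 2*Real.sin θ^3 - 3*Real.sin θ + 3*θ*Real.cos θ = 0 := hθ0
  refine ⟨θ, ⟨⟨hθ0', hθpi⟩, ?_⟩, ?_, ?_, ?_⟩
  · have hne : Real.sin θ ≠ 0 := ne_of_gt hsθ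
    field_simp
    linear_combination hgg
  · intro θ' hθ' heq
    have hsθ' : 0 < Real.sin θ' := Real.sin_pos_of_pos_of_lt_pi hθ'.1 (by linarith [hθ'.2])
    have hne' : Real.sin θ' ≠ 0 := ne_of_gt hsθ'
    have hgg' : gg θ' = 0 := by
      show 2*Real.sin θ'^3 - 3*Real.sin θ' + 3*θ'*Real.cos θ' = 0
      field_simp at heq
      linear_combination heq
    rcases le_or_gt θ' 1 with h1 | h1
    · exact absurd hgg' (gg_pos_aux θ' hθ'.1 h1).ne'
    · exact gg_anti.injOn ⟨h1.le, hθ'.2.le⟩ ⟨by linarith, by linarith⟩ (hgg'.trans hθ0.symm)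
  · show (1.2729 : ℝ) < θ
    norm_num
    linarith
  · show θ < (1.2730 : ℝ)
    norm_num
    linarith
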